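/- Let ρ̲ > 0, 0 < η̲ ≤ η̄ < ∞, and for each i let η_i ∈ [η̲, η̄] and ρ_i ≥ ρ̲. Let σ_i² = η_i²(1 - 2ρ_iφ(ρ_i)/(2Φ(ρ_i)-1)) denote the variance of SDTN(0, η_i², ρ_i), set s_n² = Σ_{i=1}^n σ_i², and let v² = η̲²(1 - 2ρ̲φ(ρ̲)/(2Φ(ρ̲)-1)). Then σ_i² ≥ v² > 0 for all i, s_n² ≥ n v², and the Lindeberg condition holds: for every ε > 0, (1/s_n²) Σ_{i=1}^n ∫_{{y : |y| ≥ ε s_n}} y² · f_{0,η_i,ρ_i}(y) dy → 0 as n → ∞. -/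

import Mathlib

open MeasureTheory Real Set Filter

/-- The standard normal density `φ(x) = (2π)^(-1/2) exp(-x²/2)`. -/
noncomputable def stdNormalPDF (x : ℝ) : ℝ :=
  (Real.sqrt (2 * Real.pi))⁻¹ * Real.exp (-x ^ 2 / 2)

/-- The standard normal CDF `Φ(x) = ∫_{-∞}^x φ(t) dt`. -/
noncomputable def stdNormalCDF (x : ℝ) : ℝ :=
  ∫ t in Set.Iic x, stdNormalPDF t

/-- The symmetric doubly truncated normal (SDTN) density with location `μ`, scale `η`
and truncation parameter `ρ`. -/
noncomputable def sdtnPDF (μ η ρ : ℝ) (x : ℝ) : ℝ :=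
  if x ∈ Set.Icc (μ - ρ * η) (μ + ρ * η) then
    stdNormalPDF ((x - μ) / η) / (η * (2 * stdNormalCDF ρ - 1))
  else 0

lemma phi_pos (x : ℝ) : 0 < stdNormalPDF x := by
  unfold stdNormalPDF
  positivity

lemma phi_cont : Continuous stdNormalPDF := by
  unfold stdNormalPDF
  continuity

lemma phi_neg (x : ℝ) : stdNormalPDF (-x) = stdNormalPDF x := by
  simp [stdNormalPDF]

lemma phi_integrable : Integrable stdNormalPDF := by
  have h := (integrable_exp_neg_mul_sq (by norm_num : (0:ℝ) < 1/2)).const_mul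
    (Real.sqrt (2 * Real.pi))⁻¹
  refine h.congr (Filter.Eventually.of_forall fun x => ?_)
  unfold stdNormalPDF
  ring_nf

lemma phi_anti {u v : ℝ} (h : |u| ≤ |v|) : stdNormalPDF v ≤ stdNormalPDF u := by
  unfold stdNormalPDF
  have h2 : u^2 ≤ v^2 := by
    have := sq_abs u ▸ sq_abs v ▸ pow_le_pow_left₀ (abs_nonneg u) h 2
    simpa [sq_abs] using this
  have : Real.exp (-v^2/2) ≤ Real.exp (-u^2/2) := Real.exp_le_exp.2 (by linarith)
  have hs : (0:ℝ) ≤ (Real.sqrt (2 * Real.pi))⁻¹ := by positivity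
  exact mul_le_mul_of_nonneg_left this hs

lemma integral_phi : ∫ x, stdNormalPDF x = 1 := by
  unfold stdNormalPDF
  rw [integral_const_mul]
  have : ∀ x : ℝ, Real.exp (-x^2/2) = Real.exp (-(1/2) * x^2) := fun x => by ring_nf
  simp_rw [this, integral_gaussian]
  rw [show π / (1/2) = 2 * π by ring]
  rw [inv_mul_cancel₀]
  positivity

lemma Phi_mono : Monotone stdNormalCDF := by
  intro a b hab
  exact setIntegral_mono_set phi_integrable.integrableOn
    (Filter.Eventually.of_forall fun x => (phi_pos x).le)
    (HasSubset.Subset.eventuallyLE (Set.Iic_subset_Iic.2 hab))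

lemma Phi_neg (x : ℝ) : stdNormalCDF (-x) = 1 - stdNormalCDF x := by
  have h1 : stdNormalCDF (-x) = ∫ t in Set.Ioi x, stdNormalPDF t := by
    have := integral_comp_neg_Iic (-x) stdNormalPDF
    simp_rw [phi_neg, neg_neg] at this
    rw [stdNormalCDF, this]
  have h2 := MeasureTheory.integral_add_compl (measurableSet_Iic (a := x)) phi_integrable
  rw [Set.compl_Iic, integral_phi] at h2
  rw [h1, stdNormalCDF]
  linarith

lemma N_eq (x : ℝ) : 2 * stdNormalCDF x - 1 = ∫ t in (-x)..x, stdNormalPDF t := by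
  rw [← intervalIntegral.integral_Iic_sub_Iic phi_integrable.integrableOn
    phi_integrable.integrableOn]
  have := Phi_neg x
  rw [stdNormalCDF, stdNormalCDF] at *
  linarith

lemma N_pos {x : ℝ} (hx : 0 < x) : 0 < 2 * stdNormalCDF x - 1 := by
  rw [N_eq]
  apply intervalIntegral.intervalIntegral_pos_of_pos_on
    phi_integrable.intervalIntegrable (fun t _ => phi_pos t) (by linarith)

lemma hasDerivAt_phi (x : ℝ) : HasDerivAt stdNormalPDF (-x * stdNormalPDF x) x := by
  have h1 : HasDerivAt (fun t : ℝ => -t ^ 2 / 2) (-x) x := by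
    have := ((hasDerivAt_pow 2 x).neg).div_const 2
    refine this.congr_deriv ?_
    simp
    ring
  have h2 := (h1.exp).const_mul (Real.sqrt (2 * Real.pi))⁻¹
  refine h2.congr_deriv ?_
  unfold stdNormalPDF
  ring

lemma hasDerivAt_negmul (x : ℝ) :
    HasDerivAt (fun t => -t * stdNormalPDF t) ((x ^ 2 - 1) * stdNormalPDF x) x := by
  have := ((hasDerivAt_id x).neg).mul (hasDerivAt_phi x)
  refine this.congr_deriv ?_
  simp [id]
  ring

lemma contI : Continuous (fun t : ℝ => (t ^ 2 - 1) * stdNormalPDF t) := by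
  exact (continuous_pow 2 |>.sub continuous_const).mul phi_cont

lemma I_eq (x : ℝ) : ∫ t in (-x)..x, t ^ 2 * stdNormalPDF t
    = (2 * stdNormalCDF x - 1) - 2 * x * stdNormalPDF x := by
  have key : ∫ t in (-x)..x, (t ^ 2 - 1) * stdNormalPDF t
      = (-x * stdNormalPDF x) - (-(-x) * stdNormalPDF (-x)) := by
    exact intervalIntegral.integral_eq_sub_of_hasDerivAt
      (fun t _ => hasDerivAt_negmul t) (contI.intervalIntegrable _ _)
  rw [phi_neg] at key
  have split : ∫ t in (-x)..x, t ^ 2 * stdNormalPDF t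
      = (∫ t in (-x)..x, (t ^ 2 - 1) * stdNormalPDF t) + ∫ t in (-x)..x, stdNormalPDF t := by
    rw [← intervalIntegral.integral_add (contI.intervalIntegrable _ _)
      (phi_cont.intervalIntegrable _ _)]
    congr 1
    ext t
    ring
  rw [split, key, ← N_eq]
  ring

lemma sqphi_nonneg (t : ℝ) : 0 ≤ t ^ 2 * stdNormalPDF t :=
  mul_nonneg (sq_nonneg t) (phi_pos t).le

lemma sqphi_cont : Continuous (fun t : ℝ => t ^ 2 * stdNormalPDF t) :=
  (continuous_pow 2).mul phi_cont

lemma sqphi_ii (a b : ℝ) : IntervalIntegrable (fun t : ℝ => t ^ 2 * stdNormalPDF t) volume a b :=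
  sqphi_cont.intervalIntegrable a b

lemma phi_ii (a b : ℝ) : IntervalIntegrable stdNormalPDF volume a b :=
  phi_cont.intervalIntegrable a b

lemma cphi_ii (c a b : ℝ) : IntervalIntegrable (fun t : ℝ => c * stdNormalPDF t) volume a b :=
  (continuous_const.mul phi_cont).intervalIntegrable a b

lemma I_pos {x : ℝ} (hx : 0 < x) : 0 < ∫ t in (-x)..x, t ^ 2 * stdNormalPDF t := by
  have hsplit := intervalIntegral.integral_add_adjacent_intervals
    (a := -x) (b := x/2) (c := x) (f := fun t => t ^ 2 * stdNormalPDF t)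
    (sqphi_ii _ _) (sqphi_ii _ _)
  have h1 : 0 ≤ ∫ t in (-x)..(x/2), t ^ 2 * stdNormalPDF t :=
    intervalIntegral.integral_nonneg (by linarith) (fun t _ => sqphi_nonneg t)
  have h2 : 0 < ∫ t in (x/2)..x, t ^ 2 * stdNormalPDF t := by
    apply intervalIntegral.intervalIntegral_pos_of_pos_on
      (sqphi_ii _ _) (fun t ht => ?_) (by linarith)
    have htpos : 0 < t := lt_trans (by linarith) ht.1
    exact mul_pos (pow_pos htpos 2) (phi_pos t)
  linarith

lemma r_pos {x : ℝ} (hx : 0 < x) :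
    0 < 1 - 2 * x * stdNormalPDF x / (2 * stdNormalCDF x - 1) := by
  have hN := N_pos hx
  have hI := I_pos hx
  have hIe := I_eq x
  rw [sub_pos, div_lt_one hN]
  linarith

lemma r_eq {x : ℝ} (hx : 0 < x) :
    1 - 2 * x * stdNormalPDF x / (2 * stdNormalCDF x - 1)
      = (∫ t in (-x)..x, t ^ 2 * stdNormalPDF t) / (2 * stdNormalCDF x - 1) := by
  have hN := (N_pos hx).ne'
  have hIe := I_eq x
  field_simp
  linarith

lemma r_mono {a b : ℝ} (ha : 0 < a) (hab : a ≤ b) :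
    1 - 2 * a * stdNormalPDF a / (2 * stdNormalCDF a - 1)
      ≤ 1 - 2 * b * stdNormalPDF b / (2 * stdNormalCDF b - 1) := by
  have hb : 0 < b := lt_of_lt_of_le ha hab
  rw [r_eq ha, r_eq hb]
  set Ia := ∫ t in (-a)..a, t ^ 2 * stdNormalPDF t with hIa
  set Ib := ∫ t in (-b)..b, t ^ 2 * stdNormalPDF t with hIb
  have hNa := N_pos ha
  have hNb := N_pos hb
  rw [div_le_div_iff₀ hNa hNb]
  -- facts
  have hNmono : 2 * stdNormalCDF a - 1 ≤ 2 * stdNormalCDF b - 1 := by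
    have := Phi_mono hab
    linarith
  -- Ia ≤ a^2 * Na
  have hIa_le : Ia ≤ a ^ 2 * (2 * stdNormalCDF a - 1) := by
    have hmono : Ia ≤ ∫ t in (-a)..a, a ^ 2 * stdNormalPDF t := by
      apply intervalIntegral.integral_mono_on (by linarith)
        (sqphi_ii _ _)
        (cphi_ii _ _ _)
      intro t ht
      have ht2 : t ^ 2 ≤ a ^ 2 := sq_le_sq' ht.1 ht.2
      exact mul_le_mul_of_nonneg_right ht2 (phi_pos t).le
    rw [intervalIntegral.integral_const_mul, ← N_eq] at hmono
    exact hmono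
  -- Ib - Ia ≥ a^2 (Nb - Na)
  have hsplitI := intervalIntegral.integral_add_adjacent_intervals
    (a := -b) (b := -a) (c := a) (f := fun t => t ^ 2 * stdNormalPDF t)
    (sqphi_ii _ _) (sqphi_ii _ _)
  have hsplitI2 := intervalIntegral.integral_add_adjacent_intervals
    (a := -b) (b := a) (c := b) (f := fun t => t ^ 2 * stdNormalPDF t)
    (sqphi_ii _ _) (sqphi_ii _ _)
  have hsplitN := intervalIntegral.integral_add_adjacent_intervals
    (a := -b) (b := -a) (c := a) (f := stdNormalPDF)
    (phi_ii _ _) (phi_ii _ _)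
  have hsplitN2 := intervalIntegral.integral_add_adjacent_intervals
    (a := -b) (b := a) (c := b) (f := stdNormalPDF)
    (phi_ii _ _) (phi_ii _ _)
  have hleft : a ^ 2 * ∫ t in (-b)..(-a), stdNormalPDF t
      ≤ ∫ t in (-b)..(-a), t ^ 2 * stdNormalPDF t := by
    rw [← intervalIntegral.integral_const_mul]
    apply intervalIntegral.integral_mono_on (by linarith)
      (cphi_ii _ _ _)
      (sqphi_ii _ _)
    intro t ht
    have ht2 : a ^ 2 ≤ t ^ 2 := by nlinarith [ht.1, ht.2]
    exact mul_le_mul_of_nonneg_right ht2 (phi_pos t).le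
  have hright : a ^ 2 * ∫ t in a..b, stdNormalPDF t
      ≤ ∫ t in a..b, t ^ 2 * stdNormalPDF t := by
    rw [← intervalIntegral.integral_const_mul]
    apply intervalIntegral.integral_mono_on hab
      (cphi_ii _ _ _)
      (sqphi_ii _ _)
    intro t ht
    have ht2 : a ^ 2 ≤ t ^ 2 := by nlinarith [ht.1, ht.2]
    exact mul_le_mul_of_nonneg_right ht2 (phi_pos t).le
  have hdiff : a ^ 2 * ((2 * stdNormalCDF b - 1) - (2 * stdNormalCDF a - 1)) ≤ Ib - Ia := by
    have hNa' := N_eq a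
    have hNb' := N_eq b
    nlinarith [hleft, hright]
  nlinarith [mul_le_mul_of_nonneg_right hIa_le (sub_nonneg.2 hNmono),
    mul_le_mul_of_nonneg_right hdiff hNa.le]

lemma sdtn_meas (μ η ρ : ℝ) : Measurable (sdtnPDF μ η ρ) := by
  unfold sdtnPDF
  exact Measurable.ite measurableSet_Icc
    ((phi_cont.measurable.comp ((measurable_id.sub measurable_const).div_const η)).div_const _)
    measurable_const

theorem sdtn_lindeberg (ρl ηl ηb : ℝ) (hρl : 0 < ρl) (hηl : 0 < ηl) (hle : ηl ≤ ηb)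
    (η ρ : ℕ → ℝ) (hη : ∀ i, η i ∈ Set.Icc ηl ηb) (hρ : ∀ i, ρl ≤ ρ i)
    (σSq : ℕ → ℝ)
    (hσSq : ∀ i, σSq i =
      (η i) ^ 2 * (1 - 2 * ρ i * stdNormalPDF (ρ i) / (2 * stdNormalCDF (ρ i) - 1)))
    (sSq : ℕ → ℝ) (hsSq : ∀ n, sSq n = ∑ i ∈ Finset.range n, σSq i)
    (vSq : ℝ) (hvSq : vSq = ηl ^ 2 * (1 - 2 * ρl * stdNormalPDF ρl / (2 * stdNormalCDF ρl - 1))) :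
    (∀ i, vSq ≤ σSq i) ∧ 0 < vSq ∧ (∀ n : ℕ, (n : ℝ) * vSq ≤ sSq n) ∧
    ∀ ε : ℝ, 0 < ε →
      Filter.Tendsto
        (fun n : ℕ => (1 / sSq n) * ∑ i ∈ Finset.range n,
          ∫ y in {y : ℝ | ε * Real.sqrt (sSq n) ≤ |y|}, y ^ 2 * sdtnPDF 0 (η i) (ρ i) y)
        Filter.atTop (nhds 0) := by
  have hrl := r_pos hρl
  have h1 : ∀ i, vSq ≤ σSq i := by
    intro i
    rw [hσSq, hvSq]
    have hrm := r_mono hρl (hρ i)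
    have hηi := hη i
    have hsq : ηl ^ 2 ≤ (η i) ^ 2 := pow_le_pow_left₀ hηl.le hηi.1 2
    nlinarith
  have h2 : 0 < vSq := by rw [hvSq]; exact mul_pos (pow_pos hηl 2) hrl
  have h3 : ∀ n : ℕ, (n : ℝ) * vSq ≤ sSq n := by
    intro n
    rw [hsSq]
    have := Finset.card_nsmul_le_sum (Finset.range n) σSq vSq (fun i _ => h1 i)
    simpa [nsmul_eq_mul] using this
  refine ⟨h1, h2, h3, ?_⟩
  intro ε hε
  have hηb : 0 < ηb := lt_of_lt_of_le hηl hle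
  set c : ℝ := 2 * stdNormalCDF ρl - 1 with hc_def
  have hc : 0 < c := N_pos hρl
  set g : ℝ → ℝ := fun y => y ^ 2 * stdNormalPDF (y / ηb) / (ηl * c) with hg_def
  have hg0 : ∀ y, 0 ≤ g y := fun y =>
    div_nonneg (mul_nonneg (sq_nonneg y) (phi_pos _).le) (by positivity)
  -- integrability of g
  have hb2 : (0:ℝ) < 1 / (2 * ηb ^ 2) := by positivity
  have hg_int : Integrable g := by
    have hηb' : ηb ≠ 0 := hηb.ne'
    have base := integrable_rpow_mul_exp_neg_mul_sq hb2 (by norm_num : (-1:ℝ) < 2)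
    have base2 : Integrable (fun y : ℝ => y ^ 2 * Real.exp (-(1 / (2 * ηb ^ 2)) * y ^ 2)) := by
      refine base.congr (Filter.Eventually.of_forall fun y => ?_)
      norm_num [Real.rpow_natCast]
    have base3 := base2.const_mul ((Real.sqrt (2 * Real.pi))⁻¹ / (ηl * c))
    refine base3.congr (Filter.Eventually.of_forall fun y => ?_)
    rw [hg_def]
    simp only [stdNormalPDF]
    rw [show -(y / ηb) ^ 2 / 2 = -(1 / (2 * ηb ^ 2)) * y ^ 2 by rw [div_pow]; field_simp]
    ring
  -- pointwise bound
  have hf0 : ∀ i y, 0 ≤ y ^ 2 * sdtnPDF 0 (η i) (ρ i) y := by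
    intro i y
    have hηi0 : 0 < η i := lt_of_lt_of_le hηl (hη i).1
    have hNi : 0 < 2 * stdNormalCDF (ρ i) - 1 := N_pos (lt_of_lt_of_le hρl (hρ i))
    unfold sdtnPDF
    split_ifs with h
    · exact mul_nonneg (sq_nonneg y) (div_nonneg (phi_pos _).le (by positivity))
    · simp
  have hbound : ∀ i y, y ^ 2 * sdtnPDF 0 (η i) (ρ i) y ≤ g y := by
    intro i y
    have hηi := hη i
    have hηi0 : 0 < η i := lt_of_lt_of_le hηl hηi.1
    have hNi : 0 < 2 * stdNormalCDF (ρ i) - 1 := N_pos (lt_of_lt_of_le hρl (hρ i))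
    have hNc : c ≤ 2 * stdNormalCDF (ρ i) - 1 := by
      have := Phi_mono (hρ i)
      rw [hc_def]
      linarith
    unfold sdtnPDF
    split_ifs with h
    · have hphi2 : stdNormalPDF ((y - 0) / η i) ≤ stdNormalPDF (y / ηb) := by
        apply phi_anti
        rw [sub_zero, abs_div, abs_div, abs_of_pos hηb, abs_of_pos hηi0]
        gcongr
        exact hηi.2
      show _ ≤ y ^ 2 * stdNormalPDF (y / ηb) / (ηl * c)
      rw [mul_div_assoc]
      refine mul_le_mul_of_nonneg_left ?_ (sq_nonneg y)
      apply div_le_div₀ (phi_pos _).le hphi2 (by positivity)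
      exact mul_le_mul hηi.1 hNc hc.le hηi0.le
    · rw [mul_zero]
      exact hg0 y
  have hf_int : ∀ i, Integrable (fun y => y ^ 2 * sdtnPDF 0 (η i) (ρ i) y) := by
    intro i
    refine hg_int.mono' ((measurable_id.pow_const 2).mul (sdtn_meas 0 (η i) (ρ i))).aestronglyMeasurable
      (Filter.Eventually.of_forall fun y => ?_)
    rw [Real.norm_eq_abs, abs_of_nonneg (hf0 i y)]
    exact hbound i y
  -- sets
  set S : ℕ → Set ℝ := fun n => {y : ℝ | ε * Real.sqrt (sSq n) ≤ |y|} with hS_def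
  set T : ℕ → Set ℝ := fun n => {y : ℝ | ε * Real.sqrt ((n : ℝ) * vSq) ≤ |y|} with hT_def
  have hSmeas : ∀ n, MeasurableSet (S n) := fun n =>
    (isClosed_le continuous_const continuous_abs).measurableSet
  have hTmeas : ∀ n, MeasurableSet (T n) := fun n =>
    (isClosed_le continuous_const continuous_abs).measurableSet
  have hST : ∀ n, S n ⊆ T n := by
    intro n y hy
    have : Real.sqrt ((n : ℝ) * vSq) ≤ Real.sqrt (sSq n) := Real.sqrt_le_sqrt (h3 n)
    have h' : ε * Real.sqrt ((n : ℝ) * vSq) ≤ ε * Real.sqrt (sSq n) :=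
      mul_le_mul_of_nonneg_left this hε.le
    exact le_trans h' hy
  -- bound each term
  have hterm : ∀ n i, (∫ y in S n, y ^ 2 * sdtnPDF 0 (η i) (ρ i) y) ≤ ∫ y in T n, g y := by
    intro n i
    have step1 : (∫ y in S n, y ^ 2 * sdtnPDF 0 (η i) (ρ i) y) ≤ ∫ y in S n, g y :=
      setIntegral_mono_on (hf_int i).integrableOn hg_int.integrableOn (hSmeas n)
        (fun y _ => hbound i y)
    have step2 : (∫ y in S n, g y) ≤ ∫ y in T n, g y :=
      setIntegral_mono_set hg_int.integrableOn
        (Filter.Eventually.of_forall hg0)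
        (HasSubset.Subset.eventuallyLE (hST n))
    linarith
  have hterm0 : ∀ n i, 0 ≤ ∫ y in S n, y ^ 2 * sdtnPDF 0 (η i) (ρ i) y := fun n i =>
    setIntegral_nonneg (hSmeas n) (fun y _ => hf0 i y)
  have hTnonneg : ∀ n, 0 ≤ ∫ y in T n, g y := fun n =>
    setIntegral_nonneg (hTmeas n) (fun y _ => hg0 y)
  -- tendsto of the dominating sequence
  have hdom : Tendsto (fun n : ℕ => ∫ y in T n, g y) atTop (nhds 0) := by
    have key : Tendsto (fun n : ℕ => ∫ y, (T n).indicator g y) atTop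
        (nhds (∫ _ : ℝ, (0:ℝ))) := by
      apply tendsto_integral_of_dominated_convergence g
        (fun n => hg_int.aestronglyMeasurable.indicator (hTmeas n)) hg_int
      · intro n
        refine Filter.Eventually.of_forall fun y => ?_
        rw [Real.norm_eq_abs, abs_of_nonneg (Set.indicator_nonneg (fun x _ => hg0 x) y)]
        exact Set.indicator_le_self' (fun x _ => hg0 x) y
      · refine Filter.Eventually.of_forall fun y => ?_
        have hev : ∀ᶠ n : ℕ in atTop, (T n).indicator g y = 0 := by
          have hgt : ∀ᶠ n : ℕ in atTop, ((|y| / ε) ^ 2 / vSq) < (n : ℝ) :=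
            tendsto_natCast_atTop_atTop.eventually_gt_atTop _
          filter_upwards [hgt] with n hn
          apply Set.indicator_of_notMem
          intro hy
          have hy' : ε * Real.sqrt ((n : ℝ) * vSq) ≤ |y| := hy
          have h1' : (|y| / ε) ^ 2 < (n : ℝ) * vSq := by
            rw [div_lt_iff₀ h2] at hn
            linarith
          have h2' : |y| / ε < Real.sqrt ((n : ℝ) * vSq) :=
            (Real.lt_sqrt (by positivity)).2 h1'
          rw [div_lt_iff₀ hε] at h2'
          nlinarith [h2']
        exact Tendsto.congr' (EventuallyEq.symm hev) tendsto_const_nhds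
    rw [integral_zero] at key
    exact key.congr (fun n => integral_indicator (hTmeas n))
  have hG : Tendsto (fun n : ℕ => (1 / vSq) * ∫ y in T n, g y) atTop (nhds 0) := by
    have := hdom.const_mul (1 / vSq)
    simpa using this
  refine squeeze_zero' (Filter.Eventually.of_forall fun n => ?_) ?_ hG
  · -- nonneg
    have hs0 : 0 ≤ sSq n := le_trans (mul_nonneg (Nat.cast_nonneg n) h2.le) (h3 n)
    exact mul_nonneg (one_div_nonneg.2 hs0) (Finset.sum_nonneg fun i _ => hterm0 n i)
  · filter_upwards [eventually_ge_atTop 1] with n hn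
    have hn1 : (1:ℝ) ≤ (n : ℝ) := by exact_mod_cast hn
    have hnv : 0 < (n : ℝ) * vSq := mul_pos (by linarith) h2
    have hs_pos : 0 < sSq n := lt_of_lt_of_le hnv (h3 n)
    set B : ℝ := ∫ y in T n, g y with hB_def
    have hsum : (∑ i ∈ Finset.range n, ∫ y in S n, y ^ 2 * sdtnPDF 0 (η i) (ρ i) y)
        ≤ (n : ℝ) * B := by
      calc (∑ i ∈ Finset.range n, ∫ y in S n, y ^ 2 * sdtnPDF 0 (η i) (ρ i) y)
          ≤ ∑ _i ∈ Finset.range n, B := Finset.sum_le_sum (fun i _ => hterm n i)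
        _ = (n : ℝ) * B := by
            rw [Finset.sum_const, Finset.card_range, nsmul_eq_mul]
    have hstep : (1 / sSq n) * (∑ i ∈ Finset.range n,
          ∫ y in S n, y ^ 2 * sdtnPDF 0 (η i) (ρ i) y)
        ≤ (1 / sSq n) * ((n : ℝ) * B) :=
      mul_le_mul_of_nonneg_left hsum (one_div_nonneg.2 hs_pos.le)
    have hinv : 1 / sSq n ≤ 1 / ((n : ℝ) * vSq) :=
      one_div_le_one_div_of_le hnv (h3 n)
    have hB0 : 0 ≤ B := hTnonneg n
    have hstep2 : (1 / sSq n) * ((n : ℝ) * B) ≤ (1 / vSq) * B := by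
      calc (1 / sSq n) * ((n : ℝ) * B)
          ≤ (1 / ((n : ℝ) * vSq)) * ((n : ℝ) * B) :=
            mul_le_mul_of_nonneg_right hinv (mul_nonneg (by linarith) hB0)
        _ = (1 / vSq) * B := by
            field_simp
    linarith
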